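/- Let P(t) = (∑_{i=0}^{n} ω_i p_i B_i^n(t)) / (∑_{i=0}^{n} ω_i B_i^n(t)) be a rational Bézier curve of degree n ≥ 2 with control points p_0, …, p_n ∈ ℝ^d and strictly positive weights ω_0, …, ω_n with ω_0 = ω_n = 1, and let Q(t) = ∑_{i=0}^{m} q_i B_i^m(t) be a Bézier curve of degree m ≥ 2. If q_m = p_n, q_{m−1} = (1 − (n/m) ω_{n−1}) p_n + (n/m) ω_{n−1} p_{n−1}, and q_{m−2} = (1/(m(m−1))) { [2 n ω_{n−1} (n ω_{n−1} − m) + n ω_{n−2} (1 − n) + m(m−1)] p_n + 2 n ω_{n−1} (m − n ω_{n−1}) p_{n−1} + n(n−1) ω_{n−2} p_{n−2} }, then Q(1) = P(1), Q′(1) = P′(1), and Q″(1) = P″(1). -/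

import Mathlib

/-- The Bernstein polynomial `B_i^n(t) = C(n,i) t^i (1-t)^(n-i)`. -/
noncomputable def bern (n i : ℕ) (t : ℝ) : ℝ :=
  (n.choose i : ℝ) * t ^ i * (1 - t) ^ (n - i)

/-- First derivative of the Bernstein polynomial. -/
noncomputable def bern' (n i : ℕ) (t : ℝ) : ℝ :=
  (n.choose i : ℝ) *
    (((i : ℝ) * t ^ (i - 1)) * (1 - t) ^ (n - i)
      - t ^ i * (((n - i : ℕ) : ℝ) * (1 - t) ^ (n - i - 1)))

/-- Second derivative of the Bernstein polynomial. -/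
noncomputable def bern'' (n i : ℕ) (t : ℝ) : ℝ :=
  (n.choose i : ℝ) *
    ((((i : ℝ) * (((i - 1 : ℕ) : ℝ) * t ^ (i - 1 - 1))) * (1 - t) ^ (n - i)
        - ((i : ℝ) * t ^ (i - 1)) * (((n - i : ℕ) : ℝ) * (1 - t) ^ (n - i - 1)))
      - (((i : ℝ) * t ^ (i - 1)) * (((n - i : ℕ) : ℝ) * (1 - t) ^ (n - i - 1))
        - t ^ i * (((n - i : ℕ) : ℝ) * (((n - i - 1 : ℕ) : ℝ) * (1 - t) ^ (n - i - 1 - 1)))))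

lemma hasDerivAt_one_sub_pow (k : ℕ) (t : ℝ) :
    HasDerivAt (fun t : ℝ => (1 - t) ^ k) (-((k : ℝ) * (1 - t) ^ (k - 1))) t := by
  have h := ((hasDerivAt_id t).const_sub 1).fun_pow k
  simpa [mul_neg_one] using h

lemma hasDerivAt_bern (n i : ℕ) (t : ℝ) : HasDerivAt (bern n i) (bern' n i t) t := by
  have h := ((hasDerivAt_pow i t).fun_mul (hasDerivAt_one_sub_pow (n - i) t)).const_mul
      ((n.choose i : ℝ))
  have e : bern n i = fun t : ℝ => (n.choose i : ℝ) * (t ^ i * (1 - t) ^ (n - i)) := by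
    funext s; simp [bern, mul_assoc]
  rw [e]
  exact h.congr_deriv (by unfold bern'; ring)

lemma hasDerivAt_bern' (n i : ℕ) (t : ℝ) : HasDerivAt (bern' n i) (bern'' n i t) t := by
  have hA : HasDerivAt (fun s : ℝ => ((i : ℝ) * s ^ (i - 1)) * (1 - s) ^ (n - i))
      (((i : ℝ) * (((i - 1 : ℕ) : ℝ) * t ^ (i - 1 - 1))) * (1 - t) ^ (n - i)
        + ((i : ℝ) * t ^ (i - 1)) * (-((((n - i : ℕ)) : ℝ) * (1 - t) ^ (n - i - 1)))) t :=
    ((hasDerivAt_pow (i - 1) t).const_mul (i : ℝ)).fun_mul (hasDerivAt_one_sub_pow (n - i) t)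
  have hB : HasDerivAt (fun s : ℝ => s ^ i * (((n - i : ℕ) : ℝ) * (1 - s) ^ (n - i - 1)))
      (((i : ℝ) * t ^ (i - 1)) * (((n - i : ℕ) : ℝ) * (1 - t) ^ (n - i - 1))
        + t ^ i * (((n - i : ℕ) : ℝ) * (-((((n - i - 1 : ℕ)) : ℝ) * (1 - t) ^ (n - i - 1 - 1))))) t :=
    (hasDerivAt_pow i t).fun_mul ((hasDerivAt_one_sub_pow (n - i - 1) t).const_mul ((n - i : ℕ) : ℝ))
  have h := (hA.fun_sub hB).const_mul ((n.choose i : ℝ))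
  have e : bern' n i = fun s : ℝ => (n.choose i : ℝ) *
      (((i : ℝ) * s ^ (i - 1)) * (1 - s) ^ (n - i)
        - s ^ i * (((n - i : ℕ) : ℝ) * (1 - s) ^ (n - i - 1))) := rfl
  rw [e]
  exact h.congr_deriv (by unfold bern''; ring)

lemma choose_mid (k : ℕ) : (k + 2).choose k * 2 = (k + 2) * (k + 1) := by
  induction k with
  | zero => rfl
  | succ k ih =>
    have h : (k + 3).choose (k + 1) = (k + 2).choose k + (k + 2).choose (k + 1) :=
      Nat.choose_succ_succ (k + 2) k
    have h2 : (k + 2).choose (k + 1) = k + 2 := Nat.choose_succ_self_right (k + 1)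
    have h3 : (k + 1 + 2) = k + 3 := rfl
    rw [h3, h, h2]
    nlinarith [ih]

section Sums

variable {F : Type*} [AddCommGroup F] [Module ℝ F]

lemma bern_one_of_lt {n i : ℕ} (h : i < n) : bern n i 1 = 0 := by
  simp [bern, zero_pow (show n - i ≠ 0 by omega)]

lemma sum_bern_smul (n : ℕ) (v : ℕ → F) :
    ∑ i ∈ Finset.range (n + 1), bern n i 1 • v i = v n := by
  rw [Finset.sum_range_succ, Finset.sum_eq_zero, zero_add]
  · simp [bern]
  · intro i hi
    rw [bern_one_of_lt (Finset.mem_range.mp hi), zero_smul]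

lemma bern'_one_of_lt {n i : ℕ} (h : i + 1 < n) : bern' n i 1 = 0 := by
  simp [bern', zero_pow (show n - i ≠ 0 by omega), zero_pow (show n - i - 1 ≠ 0 by omega)]

lemma sum_bern'_smul (n : ℕ) (hn : 1 ≤ n) (v : ℕ → F) :
    ∑ i ∈ Finset.range (n + 1), bern' n i 1 • v i = (n : ℝ) • v n - (n : ℝ) • v (n - 1) := by
  obtain ⟨k, rfl⟩ : ∃ k, n = k + 1 := ⟨n - 1, by omega⟩
  show ∑ i ∈ Finset.range (k + 1 + 1), bern' (k + 1) i 1 • v i = _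
  rw [Finset.sum_range_succ, Finset.sum_range_succ, Finset.sum_eq_zero, zero_add]
  · have e1 : bern' (k + 1) (k + 1) 1 = (k : ℝ) + 1 := by
      simp [bern']
    have e2 : bern' (k + 1) k 1 = -((k : ℝ) + 1) := by
      simp [bern', show k + 1 - k = 1 by omega, Nat.choose_succ_self_right]
    rw [e1, e2]
    push_cast
    module
  · intro i hi
    rw [bern'_one_of_lt (by have := Finset.mem_range.mp hi; omega), zero_smul]

lemma bern''_one_of_lt {n i : ℕ} (h : i + 2 < n) : bern'' n i 1 = 0 := by
  simp [bern'', zero_pow (show n - i ≠ 0 by omega), zero_pow (show n - i - 1 ≠ 0 by omega),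
    zero_pow (show n - i - 1 - 1 ≠ 0 by omega)]

lemma sum_bern''_smul (n : ℕ) (hn : 2 ≤ n) (v : ℕ → F) :
    ∑ i ∈ Finset.range (n + 1), bern'' n i 1 • v i =
      ((n : ℝ) * ((n : ℝ) - 1)) • v n - (2 * (n : ℝ) * ((n : ℝ) - 1)) • v (n - 1)
        + ((n : ℝ) * ((n : ℝ) - 1)) • v (n - 2) := by
  obtain ⟨k, rfl⟩ : ∃ k, n = k + 2 := ⟨n - 2, by omega⟩
  show ∑ i ∈ Finset.range (k + 1 + 1 + 1), bern'' (k + 2) i 1 • v i = _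
  rw [Finset.sum_range_succ, Finset.sum_range_succ, Finset.sum_range_succ,
    Finset.sum_eq_zero, zero_add]
  · have e1 : bern'' (k + 2) (k + 2) 1 = ((k : ℝ) + 2) * ((k : ℝ) + 1) := by
      simp [bern'']
    have e2 : bern'' (k + 2) (k + 1) 1 = -(2 * (((k : ℝ) + 2) * ((k : ℝ) + 1))) := by
      simp [bern'', show k + 2 - (k + 1) = 1 by omega, Nat.choose_succ_self_right]
      ring
    have e3 : bern'' (k + 2) k 1 = ((k : ℝ) + 2) * ((k : ℝ) + 1) := by
      simp [bern'', show k + 2 - k = 2 by omega]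
      exact_mod_cast choose_mid k
    rw [e1, e2, e3]
    push_cast
    module
  · intro i hi
    rw [bern''_one_of_lt (by have := Finset.mem_range.mp hi; omega), zero_smul]

end Sums

section Pside

variable {F : Type*} [NormedAddCommGroup F] [NormedSpace ℝ F]

/-- Weight function of a rational Bézier curve. -/
noncomputable def wfun (n : ℕ) (ω : ℕ → ℝ) (t : ℝ) : ℝ :=
  ∑ i ∈ Finset.range (n + 1), ω i * bern n i t

noncomputable def wfun' (n : ℕ) (ω : ℕ → ℝ) (t : ℝ) : ℝ :=
  ∑ i ∈ Finset.range (n + 1), ω i * bern' n i t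

noncomputable def wfun'' (n : ℕ) (ω : ℕ → ℝ) (t : ℝ) : ℝ :=
  ∑ i ∈ Finset.range (n + 1), ω i * bern'' n i t

noncomputable def Nfun (n : ℕ) (ω : ℕ → ℝ) (p : ℕ → F) (t : ℝ) : F :=
  ∑ i ∈ Finset.range (n + 1), (ω i * bern n i t) • p i

noncomputable def Nfun' (n : ℕ) (ω : ℕ → ℝ) (p : ℕ → F) (t : ℝ) : F :=
  ∑ i ∈ Finset.range (n + 1), (ω i * bern' n i t) • p i

noncomputable def Nfun'' (n : ℕ) (ω : ℕ → ℝ) (p : ℕ → F) (t : ℝ) : F :=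
  ∑ i ∈ Finset.range (n + 1), (ω i * bern'' n i t) • p i

lemma hasDerivAt_wfun (n : ℕ) (ω : ℕ → ℝ) (t : ℝ) :
    HasDerivAt (wfun n ω) (wfun' n ω t) t :=
  HasDerivAt.fun_sum fun i _ => (hasDerivAt_bern n i t).const_mul (ω i)

lemma hasDerivAt_wfun' (n : ℕ) (ω : ℕ → ℝ) (t : ℝ) :
    HasDerivAt (wfun' n ω) (wfun'' n ω t) t :=
  HasDerivAt.fun_sum fun i _ => (hasDerivAt_bern' n i t).const_mul (ω i)

lemma hasDerivAt_Nfun (n : ℕ) (ω : ℕ → ℝ) (p : ℕ → F) (t : ℝ) :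
    HasDerivAt (Nfun n ω p) (Nfun' n ω p t) t :=
  HasDerivAt.fun_sum fun i _ => ((hasDerivAt_bern n i t).const_mul (ω i)).smul_const (p i)

lemma hasDerivAt_Nfun' (n : ℕ) (ω : ℕ → ℝ) (p : ℕ → F) (t : ℝ) :
    HasDerivAt (Nfun' n ω p) (Nfun'' n ω p t) t :=
  HasDerivAt.fun_sum fun i _ => ((hasDerivAt_bern' n i t).const_mul (ω i)).smul_const (p i)

lemma wfun_one (n : ℕ) (ω : ℕ → ℝ) : wfun n ω 1 = ω n := by
  simpa [smul_eq_mul, mul_comm, wfun] using sum_bern_smul (F := ℝ) n ω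

lemma wfun'_one (n : ℕ) (hn : 1 ≤ n) (ω : ℕ → ℝ) :
    wfun' n ω 1 = (n : ℝ) * ω n - (n : ℝ) * ω (n - 1) := by
  simpa [smul_eq_mul, mul_comm, wfun'] using sum_bern'_smul (F := ℝ) n hn ω

lemma wfun''_one (n : ℕ) (hn : 2 ≤ n) (ω : ℕ → ℝ) :
    wfun'' n ω 1 = (n : ℝ) * ((n : ℝ) - 1) * ω n
      - 2 * (n : ℝ) * ((n : ℝ) - 1) * ω (n - 1) + (n : ℝ) * ((n : ℝ) - 1) * ω (n - 2) := by
  have h := sum_bern''_smul (F := ℝ) n hn ω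
  simp only [smul_eq_mul] at h
  unfold wfun''
  rw [Finset.sum_congr rfl (fun i _ => mul_comm (ω i) (bern'' n i 1)), h]

lemma Nfun_one (n : ℕ) (ω : ℕ → ℝ) (p : ℕ → F) : Nfun n ω p 1 = ω n • p n := by
  have h := sum_bern_smul n (fun i => ω i • p i)
  simpa [Nfun, smul_smul, mul_comm] using h

lemma Nfun'_one (n : ℕ) (hn : 1 ≤ n) (ω : ℕ → ℝ) (p : ℕ → F) :
    Nfun' n ω p 1 = (n : ℝ) • ω n • p n - (n : ℝ) • ω (n - 1) • p (n - 1) := by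
  have h := sum_bern'_smul n hn (fun i => ω i • p i)
  simpa [Nfun', smul_smul, mul_comm] using h

lemma Nfun''_one (n : ℕ) (hn : 2 ≤ n) (ω : ℕ → ℝ) (p : ℕ → F) :
    Nfun'' n ω p 1 = ((n : ℝ) * ((n : ℝ) - 1)) • ω n • p n
      - (2 * (n : ℝ) * ((n : ℝ) - 1)) • ω (n - 1) • p (n - 1)
      + ((n : ℝ) * ((n : ℝ) - 1)) • ω (n - 2) • p (n - 2) := by
  have h := sum_bern''_smul n hn (fun i => ω i • p i)
  simpa [Nfun'', smul_smul, mul_comm] using h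

lemma P_contact (n : ℕ) (hn : 2 ≤ n) (p : ℕ → F) (ω : ℕ → ℝ) (hωn : ω n = 1)
    (P : ℝ → F) (hP : ∀ t, P t = (wfun n ω t)⁻¹ • Nfun n ω p t) :
    P 1 = p n ∧
      deriv P 1 = ((n : ℝ) * ω (n - 1)) • p n - ((n : ℝ) * ω (n - 1)) • p (n - 1) ∧
      deriv (deriv P) 1 =
        ((n : ℝ) * ((n : ℝ) - 1) - 2 * (n : ℝ) ^ 2 * (1 - ω (n - 1))
            + 2 * (n : ℝ) ^ 2 * (1 - ω (n - 1)) ^ 2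
            - (n : ℝ) * ((n : ℝ) - 1) * (1 - 2 * ω (n - 1) + ω (n - 2))) • p n
          + (-(2 * (n : ℝ) * ((n : ℝ) - 1) * ω (n - 1))
            + 2 * (n : ℝ) ^ 2 * (1 - ω (n - 1)) * ω (n - 1)) • p (n - 1)
          + ((n : ℝ) * ((n : ℝ) - 1) * ω (n - 2)) • p (n - 2) := by
  have hn1 : 1 ≤ n := by omega
  have hPf : P = fun t => (wfun n ω t)⁻¹ • Nfun n ω p t := funext hP
  have hw1 : wfun n ω 1 = 1 := by rw [wfun_one, hωn]
  have hne : wfun n ω 1 ≠ 0 := by rw [hw1]; norm_num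
  have hF : ∀ t, wfun n ω t ≠ 0 → HasDerivAt P
      ((wfun n ω t)⁻¹ • Nfun' n ω p t
        + (-(wfun' n ω t) / wfun n ω t ^ 2) • Nfun n ω p t) t := by
    intro t ht
    rw [hPf]
    exact ((hasDerivAt_wfun n ω t).inv ht).smul (hasDerivAt_Nfun n ω p t)
  refine ⟨?_, ?_, ?_⟩
  · rw [hP 1, hw1, Nfun_one, hωn]
    simp
  · rw [(hF 1 hne).deriv, hw1, Nfun_one n ω p, Nfun'_one n hn1 ω p,
      wfun'_one n hn1 ω, hωn]
    match_scalars <;> ring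
  · have hwc : Continuous (wfun n ω) :=
      continuous_iff_continuousAt.mpr fun t => (hasDerivAt_wfun n ω t).continuousAt
    have hU : IsOpen {t : ℝ | wfun n ω t ≠ 0} := by
      have e : {t : ℝ | wfun n ω t ≠ 0} = wfun n ω ⁻¹' {(0 : ℝ)}ᶜ := rfl
      rw [e]
      exact isOpen_compl_singleton.preimage hwc
    have hmem : {t : ℝ | wfun n ω t ≠ 0} ∈ nhds (1 : ℝ) := hU.mem_nhds (by exact hne)
    have hev : deriv P =ᶠ[nhds (1 : ℝ)] fun t =>
        (wfun n ω t)⁻¹ • Nfun' n ω p t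
          + (-(wfun' n ω t) / wfun n ω t ^ 2) • Nfun n ω p t := by
      filter_upwards [hmem] with t ht
      exact (hF t ht).deriv
    have hne2 : wfun n ω 1 ^ 2 ≠ 0 := pow_ne_zero _ hne
    have h1 : HasDerivAt (fun t => (wfun n ω t)⁻¹ • Nfun' n ω p t)
        ((wfun n ω 1)⁻¹ • Nfun'' n ω p 1
          + (-(wfun' n ω 1) / wfun n ω 1 ^ 2) • Nfun' n ω p 1) 1 :=
      ((hasDerivAt_wfun n ω 1).inv hne).smul (hasDerivAt_Nfun' n ω p 1)
    have hdiv : HasDerivAt (fun t => -(wfun' n ω t) / wfun n ω t ^ 2)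
        ((-(wfun'' n ω 1) * wfun n ω 1 ^ 2
          - -(wfun' n ω 1) * (2 * wfun n ω 1 ^ (2 - 1) * wfun' n ω 1)) / (wfun n ω 1 ^ 2) ^ 2)
        1 :=
      ((hasDerivAt_wfun' n ω 1).neg).div ((hasDerivAt_wfun n ω 1).pow 2) hne2
    have h2 := hdiv.fun_smul (hasDerivAt_Nfun n ω p 1)
    rw [hev.deriv_eq, (h1.fun_add h2).deriv, hw1, wfun'_one n hn1 ω, wfun''_one n hn ω,
      Nfun_one n ω p, Nfun'_one n hn1 ω p, Nfun''_one n hn ω p, hωn]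
    match_scalars <;> field_simp <;> ring

end Pside

theorem constrained_contact_at_one (n : ℕ) (hn : 2 ≤ n) (d : ℕ)
    (p : ℕ → EuclideanSpace ℝ (Fin d)) (ω : ℕ → ℝ)
    (hω : ∀ i ≤ n, 0 < ω i) (hω0 : ω 0 = 1) (hωn : ω n = 1)
    (P : ℝ → EuclideanSpace ℝ (Fin d))
    (hP : ∀ t, P t = (∑ i ∈ Finset.range (n + 1), ω i * bern n i t)⁻¹ •
        ∑ i ∈ Finset.range (n + 1), (ω i * bern n i t) • p i)
    (m : ℕ) (hm : 2 ≤ m)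
    (q : ℕ → EuclideanSpace ℝ (Fin d))
    (Q : ℝ → EuclideanSpace ℝ (Fin d))
    (hQ : ∀ t, Q t = ∑ i ∈ Finset.range (m + 1), bern m i t • q i)
    (hqm : q m = p n)
    (hqm1 : q (m - 1) = (1 - (n : ℝ) / m * ω (n - 1)) • p n +
        ((n : ℝ) / m * ω (n - 1)) • p (n - 1))
    (hqm2 : q (m - 2) = (1 / ((m : ℝ) * ((m : ℝ) - 1))) •
        ((2 * (n : ℝ) * ω (n - 1) * ((n : ℝ) * ω (n - 1) - (m : ℝ)) +
            (n : ℝ) * ω (n - 2) * (1 - (n : ℝ)) + (m : ℝ) * ((m : ℝ) - 1)) • p n +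
          (2 * (n : ℝ) * ω (n - 1) * ((m : ℝ) - (n : ℝ) * ω (n - 1))) • p (n - 1) +
          ((n : ℝ) * ((n : ℝ) - 1) * ω (n - 2)) • p (n - 2))) :
    Q 1 = P 1 ∧ deriv Q 1 = deriv P 1 ∧ deriv (deriv Q) 1 = deriv (deriv P) 1 := by
  obtain ⟨hP1, hP2, hP3⟩ := P_contact n hn p ω hωn P hP
  have hm0 : (m : ℝ) ≠ 0 := by positivity
  have hm2 : (2 : ℝ) ≤ (m : ℝ) := by exact_mod_cast hm
  have hm1 : (m : ℝ) - 1 ≠ 0 := by linarith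
  have hQf : Q = fun t => ∑ i ∈ Finset.range (m + 1), bern m i t • q i := funext hQ
  have hQder : ∀ t, HasDerivAt Q (∑ i ∈ Finset.range (m + 1), bern' m i t • q i) t := by
    intro t
    rw [hQf]
    exact HasDerivAt.fun_sum fun i _ => (hasDerivAt_bern m i t).smul_const (q i)
  have hderivQ : deriv Q = fun t => ∑ i ∈ Finset.range (m + 1), bern' m i t • q i :=
    funext fun t => (hQder t).deriv
  have hQdd : HasDerivAt (fun t => ∑ i ∈ Finset.range (m + 1), bern' m i t • q i)
      (∑ i ∈ Finset.range (m + 1), bern'' m i 1 • q i) 1 :=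
    HasDerivAt.fun_sum fun i _ => (hasDerivAt_bern' m i 1).smul_const (q i)
  refine ⟨?_, ?_, ?_⟩
  · rw [hQ 1, sum_bern_smul m q, hqm, hP1]
  · rw [(hQder 1).deriv, sum_bern'_smul m (by omega) q, hqm, hqm1, hP2]
    match_scalars <;> field_simp <;> ring
  · rw [hderivQ, hQdd.deriv, sum_bern''_smul m hm q, hqm, hqm1, hqm2, hP3]
    match_scalars <;> field_simp <;> ring
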